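/- arXiv:1203.2090 — 4 statements merged into one kernel-verified Lean document; each statement's English description precedes it below -/
import Mathlib

section
/- There do not exist distinct nonnegative integers n and m and a positive integer k such that ⌊φn⌋ - k = ⌊φm⌋ and ⌊φ²n⌋ - k = ⌊φ²m⌋, where φ = (1+√5)/2. -/
noncomputable def phi : ℝ := (1 + Real.sqrt 5) / 2

noncomputable def fl (n : ℕ) : ℕ := ⌊phi * n⌋₊
noncomputable def fl2 (n : ℕ) : ℕ := ⌊phi ^ 2 * n⌋₊

lemma phi_nonneg : 0 ≤ phi := by
  unfold phi
  positivity

lemma phi_sq : phi ^ 2 = phi + 1 := by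
  have h5 : Real.sqrt 5 ^ 2 = 5 := Real.sq_sqrt (by norm_num)
  unfold phi
  nlinarith [h5]

lemma fl2_eq (n : ℕ) : fl2 n = fl n + n := by
  unfold fl2 fl
  rw [phi_sq, add_mul, one_mul, Nat.floor_add_natCast (mul_nonneg phi_nonneg n.cast_nonneg)]

theorem stmt8 :
    ¬∃ (n m k : ℕ), n ≠ m ∧ 1 ≤ k ∧ (fl n : ℤ) - k = fl m ∧
      (fl2 n : ℤ) - k = fl2 m := by
  rintro ⟨n, m, k, hnm, -, h1, h2⟩
  rw [fl2_eq, fl2_eq] at h2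
  push_cast at h2
  omega
end

section
/- Define the game F-Wythoff on positions (a,b) of nonnegative integers (unordered pairs), where a legal move from (a,b) with a ≤ b is either: removing any positive number of tokens from one pile, or removing k ≥ 1 tokens from both piles provided a - k ≥ 1 and ⌊(b-k)/(a-k)⌋ = ⌊b/a⌋ (integer division). Then the set of P-positions of F-Wythoff is exactly {(0,0)} ∪ {(⌊φn⌋+1, ⌊φ²n⌋+1) : n ≥ 0}, where φ = (1+√5)/2. -/
lemma sqrt5_sq : Real.sqrt 5 ^ 2 = 5 := Real.sq_sqrt (by norm_num)

lemma sqrt5_gt_two : (2:ℝ) < Real.sqrt 5 := by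
  nlinarith [sqrt5_sq, Real.sqrt_nonneg 5]

lemma phi_gt_one : (1:ℝ) < phi := by unfold phi; nlinarith [sqrt5_gt_two]

lemma phi_pos : (0:ℝ) < phi := lt_trans one_pos phi_gt_one

lemma phi_irr : Irrational phi := by
  have h5 : Irrational (Real.sqrt 5) := (Nat.prime_five).irrational_sqrt
  have h1 : Irrational ((1:ℚ) + Real.sqrt 5) := h5.ratCast_add 1
  have h2 := h1.div_natCast (two_ne_zero)
  simpa [phi] using h2

lemma phi_conj : Real.HolderConjugate phi (phi ^ 2) := by
  rw [Real.holderConjugate_iff]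
  constructor
  · exact phi_gt_one
  · have h1 : phi ≠ 0 := ne_of_gt phi_pos
    have h2 : phi ^ 2 ≠ 0 := pow_ne_zero 2 h1
    field_simp
    nlinarith [phi_sq, phi_pos]

lemma le_fl (n : ℕ) : n ≤ fl n := by
  unfold fl
  exact Nat.le_floor (by nlinarith [phi_gt_one, Nat.cast_nonneg (α := ℝ) n])

lemma fl_zero : fl 0 = 0 := by unfold fl; simp

lemma fl2_zero : fl2 0 = 0 := by rw [fl2_eq, fl_zero]

lemma fl_strictMono : StrictMono fl := by
  apply strictMono_nat_of_lt_succ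
  intro n
  have h0 : (0:ℝ) ≤ phi * n := mul_nonneg phi_pos.le (Nat.cast_nonneg n)
  have h1 : (fl n : ℝ) ≤ phi * n := Nat.floor_le h0
  have h2 : fl n + 1 ≤ fl (n+1) := by
    apply Nat.le_floor
    push_cast
    nlinarith [phi_gt_one]
  omega

lemma fl_inj {m n : ℕ} (h : fl m = fl n) : m = n := fl_strictMono.injective h

lemma fl2_inj {m n : ℕ} (h : fl2 m = fl2 n) : m = n := by
  rcases lt_trichotomy m n with h' | h' | h'
  · have := fl_strictMono h'; rw [fl2_eq, fl2_eq] at h; omega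
  · exact h'
  · have := fl_strictMono h'; rw [fl2_eq, fl2_eq] at h; omega

lemma cast_fl (n : ℕ) : (fl n : ℤ) = beattySeq phi n := by
  unfold fl beattySeq
  rw [Int.natCast_floor_eq_floor (mul_nonneg phi_pos.le (Nat.cast_nonneg n))]
  congr 1
  push_cast
  ring

lemma cast_fl2 (n : ℕ) : (fl2 n : ℤ) = beattySeq (phi ^ 2) n := by
  unfold fl2 beattySeq
  rw [Int.natCast_floor_eq_floor (mul_nonneg (by positivity) (Nat.cast_nonneg n))]
  congr 1
  push_cast
  ring

lemma beatty_disj {m n : ℕ} (hm : 1 ≤ m) (hn : 1 ≤ n) : fl m ≠ fl2 n := by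
  intro h
  have hsym := phi_irr.beattySeq_symmDiff_beattySeq_pos phi_conj
  have h1 : (fl m : ℤ) ∈ {x | ∃ k > 0, beattySeq phi k = x} :=
    ⟨(m : ℤ), by exact_mod_cast hm, (cast_fl m).symm⟩
  have h2 : (fl m : ℤ) ∈ {x | ∃ k > 0, beattySeq (phi ^ 2) k = x} :=
    ⟨(n : ℤ), by exact_mod_cast hn, by rw [← cast_fl2, ← h]⟩
  have hpos : (fl m : ℤ) ∈ {n : ℤ | 0 < n} := by
    have := le_fl m
    simp only [Set.mem_setOf_eq]
    exact_mod_cast lt_of_lt_of_le hm this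
  rw [← hsym, Set.mem_symmDiff] at hpos
  tauto

lemma beatty_cover (c : ℕ) (hc : 1 ≤ c) : ∃ n, 1 ≤ n ∧ (c = fl n ∨ c = fl2 n) := by
  have hsym := phi_irr.beattySeq_symmDiff_beattySeq_pos phi_conj
  have hpos : (c : ℤ) ∈ {n : ℤ | 0 < n} := by
    simp only [Set.mem_setOf_eq]; exact_mod_cast hc
  rw [← hsym, Set.mem_symmDiff] at hpos
  rcases hpos with ⟨⟨k, hk, hbk⟩, -⟩ | ⟨⟨k, hk, hbk⟩, -⟩
  · refine ⟨k.toNat, by omega, Or.inl ?_⟩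
    have : (fl k.toNat : ℤ) = (c : ℤ) := by
      rw [cast_fl, show ((k.toNat : ℕ) : ℤ) = k by omega]
      exact hbk
    exact_mod_cast this.symm
  · refine ⟨k.toNat, by omega, Or.inr ?_⟩
    have : (fl2 k.toNat : ℤ) = (c : ℤ) := by
      rw [cast_fl2, show ((k.toNat : ℕ) : ℤ) = k by omega]
      exact hbk
    exact_mod_cast this.symm

def FMove (p q : ℕ × ℕ) : Prop :=
  ∃ a b x y : ℕ, a ≤ b ∧ x ≤ y ∧ (p = (a, b) ∨ p = (b, a)) ∧ (q = (x, y) ∨ q = (y, x)) ∧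
    ((x = a ∧ y < b) ∨ (x < a ∧ y = b) ∨ (x < a ∧ y = a) ∨
      (∃ k, 1 ≤ k ∧ k < a ∧ (b - k) / (a - k) = b / a ∧ x = a - k ∧ y = b - k))

theorem fMove_lt {p q : ℕ × ℕ} (h : FMove p q) : q.1 + q.2 < p.1 + p.2 := by
  obtain ⟨a, b, x, y, hab, hxy, hp, hq, hc⟩ := h
  have hps : p.1 + p.2 = a + b := by rcases hp with h | h <;> subst h <;> simp <;> omega
  have hqs : q.1 + q.2 = x + y := by rcases hq with h | h <;> subst h <;> simp <;> omega
  rw [hps, hqs]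
  rcases hc with ⟨h1, h2⟩ | ⟨h1, h2⟩ | ⟨h1, h2⟩ | ⟨k, hk1, hk2, _, h1, h2⟩ <;> omega

def PPos (p : ℕ × ℕ) : Prop := ∀ q, FMove p q → ¬ PPos q
termination_by p.1 + p.2
decreasing_by exact fMove_lt (by assumption)

noncomputable def grundy (p : ℕ × ℕ) : ℕ :=
  sInf {g : ℕ | ∀ q, FMove p q → grundy q ≠ g}
termination_by p.1 + p.2
decreasing_by exact fMove_lt (by assumption)

def InS (p : ℕ × ℕ) : Prop :=
  p = (0, 0) ∨ ∃ n : ℕ, p = (fl n + 1, fl2 n + 1) ∨ p = (fl2 n + 1, fl n + 1)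

lemma InS_swap {a b : ℕ} (h : InS (a, b)) : InS (b, a) := by
  rcases h with h | ⟨n, h | h⟩
  · left; simp [Prod.ext_iff] at h ⊢; omega
  · exact Or.inr ⟨n, Or.inr (by simp [Prod.ext_iff] at h ⊢; omega)⟩
  · exact Or.inr ⟨n, Or.inl (by simp [Prod.ext_iff] at h ⊢; omega)⟩

lemma InS_sorted {x y : ℕ} (h : x ≤ y) :
    InS (x, y) ↔ (x = 0 ∧ y = 0) ∨ ∃ n, x = fl n + 1 ∧ y = fl2 n + 1 := by
  constructor
  · rintro (h0 | ⟨n, h1 | h1⟩)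
    · left; simpa [Prod.ext_iff] using h0
    · right; exact ⟨n, by simpa [Prod.ext_iff] using h1⟩
    · right
      simp only [Prod.ext_iff] at h1
      have hf := fl2_eq n
      have hn0 : n = 0 := by omega
      subst hn0
      exact ⟨0, by omega⟩
  · rintro (⟨hx, hy⟩ | ⟨n, hx, hy⟩)
    · left; simp [Prod.ext_iff, hx, hy]
    · exact Or.inr ⟨n, Or.inl (by simp [Prod.ext_iff, hx, hy])⟩

lemma no_move_in_S {p q : ℕ × ℕ} (hp : InS p) (hm : FMove p q) : ¬ InS q := by
  obtain ⟨a, b, x, y, hab, hxy, hpe, hqe, hc⟩ := hm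
  have hpS : InS (a, b) := by
    rcases hpe with h | h
    · subst h; exact hp
    · subst h; exact InS_swap hp
  intro hqS
  have hqS' : InS (x, y) := by
    rcases hqe with h | h
    · subst h; exact hqS
    · subst h; exact InS_swap hqS
  rw [InS_sorted hab] at hpS
  rw [InS_sorted hxy] at hqS'
  rcases hpS with ⟨ha, hb⟩ | ⟨n, ha, hb⟩
  · subst ha; subst hb
    rcases hc with ⟨h1, h2⟩ | ⟨h1, h2⟩ | ⟨h1, h2⟩ | ⟨k, hk1, hk2, _, h1, h2⟩ <;> omega
  · have hfn := fl2_eq n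
    have hln := le_fl n
    rcases hqS' with ⟨hx, hy⟩ | ⟨m, hx, hy⟩
    · rcases hc with ⟨h1, h2⟩ | ⟨h1, h2⟩ | ⟨h1, h2⟩ | ⟨k, hk1, hk2, _, h1, h2⟩ <;> omega
    · have hfm := fl2_eq m
      have hlm := le_fl m
      rcases hc with ⟨h1, h2⟩ | ⟨h1, h2⟩ | ⟨h1, h2⟩ | ⟨k, hk1, hk2, _, h1, h2⟩
      · have : fl m = fl n := by omega
        have := fl_inj this
        omega
      · have : fl2 m = fl2 n := by omega
        have := fl2_inj this
        omega
      · -- y = a : fl2 m = fl n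
        have hmn : fl2 m = fl n := by omega
        rcases Nat.eq_zero_or_pos m with rfl | hm1
        · have := fl2_zero
          have hn0 : n = 0 := by omega
          have := fl_zero
          subst hn0
          omega
        · rcases Nat.eq_zero_or_pos n with rfl | hn1
          · have := fl_zero
            omega
          · exact beatty_disj hn1 hm1 hmn.symm
      · have hmn : m = n := by omega
        subst hmn
        omega

lemma exists_move_to_S (p : ℕ × ℕ) (a b : ℕ) (hab : a ≤ b)
    (hpe : p = (a, b) ∨ p = (b, a)) (hS : ¬ InS (a, b)) : ∃ q, FMove p q ∧ InS q := by
  rcases Nat.eq_zero_or_pos a with rfl | ha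
  · have hb : 1 ≤ b := by
      rcases Nat.eq_zero_or_pos b with rfl | h
      · exact absurd (Or.inl rfl) hS
      · exact h
    exact ⟨(0, 0), ⟨0, b, 0, 0, by omega, le_refl 0, hpe, Or.inl rfl,
      Or.inl ⟨rfl, hb⟩⟩, Or.inl rfl⟩
  · have key : (∃ m, a = fl m + 1) ∨ (∃ m, 1 ≤ m ∧ a = fl2 m + 1) := by
      rcases Nat.lt_or_ge a 2 with h | h
      · left; exact ⟨0, by have := fl_zero; omega⟩
      · obtain ⟨m, hm1, hm2⟩ := beatty_cover (a - 1) (by omega)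
        rcases hm2 with h' | h'
        · left; exact ⟨m, by omega⟩
        · right; exact ⟨m, hm1, by omega⟩
    rcases key with ⟨m, ham⟩ | ⟨m, hm1, ham⟩
    · have hfm := fl2_eq m
      have hlm := le_fl m
      rcases lt_trichotomy b (fl2 m + 1) with hb | hb | hb
      · -- diagonal move
        have hnm : b - a < m := by omega
        have hflnm : fl (b - a) < fl m := fl_strictMono hnm
        have hfn := fl2_eq (b - a)
        have hln := le_fl (b - a)
        refine ⟨(fl (b - a) + 1, fl2 (b - a) + 1),
          ⟨a, b, fl (b - a) + 1, fl2 (b - a) + 1, hab, by omega, hpe, Or.inl rfl,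
            Or.inr (Or.inr (Or.inr ⟨a - (fl (b - a) + 1), by omega, by omega, ?_, by omega, by omega⟩))⟩,
          Or.inr ⟨b - a, Or.inl rfl⟩⟩
        have hd1 : (b - (a - (fl (b - a) + 1))) / (a - (a - (fl (b - a) + 1))) = 1 := by
          apply Nat.div_eq_of_lt_le (by omega) (by omega)
        have hd2 : b / a = 1 := Nat.div_eq_of_lt_le (by omega) (by omega)
        rw [hd1, hd2]
      · exact absurd (Or.inr ⟨m, Or.inl (by rw [ham, hb])⟩) hS
      · refine ⟨(a, fl2 m + 1), ⟨a, b, a, fl2 m + 1, hab, by omega, hpe, Or.inl rfl,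
          Or.inl ⟨rfl, by omega⟩⟩, Or.inr ⟨m, Or.inl (by rw [ham])⟩⟩
    · have hfm := fl2_eq m
      have hlm := le_fl m
      refine ⟨(fl m + 1, a), ⟨a, b, fl m + 1, a, hab, by omega, hpe, Or.inl rfl,
        Or.inr (Or.inr (Or.inl ⟨by omega, rfl⟩))⟩, Or.inr ⟨m, Or.inl (by rw [ham])⟩⟩

lemma ppos_iff_inS (p : ℕ × ℕ) : PPos p ↔ InS p := by
  suffices h : ∀ N (p : ℕ × ℕ), p.1 + p.2 ≤ N → (PPos p ↔ InS p) from h (p.1 + p.2) p le_rfl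
  intro N
  induction N with
  | zero =>
    intro p hp
    have hp0 : p = (0, 0) := by
      obtain ⟨p1, p2⟩ := p
      simp only [Prod.ext_iff]
      omega
    subst hp0
    constructor
    · intro _; exact Or.inl rfl
    · intro _
      rw [PPos]
      intro q hm _
      obtain ⟨a, b, x, y, hab, hxy, hpe, hqe, hc⟩ := hm
      have : a = 0 ∧ b = 0 := by
        rcases hpe with h | h <;> simp [Prod.ext_iff] at h <;> omega
      rcases hc with ⟨h1, h2⟩ | ⟨h1, h2⟩ | ⟨h1, h2⟩ | ⟨k, hk1, hk2, _, h1, h2⟩ <;> omega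
  | succ N ih =>
    intro p hp
    constructor
    · intro hP
      by_contra hS
      obtain ⟨a, b, hab, hpe⟩ : ∃ a b, a ≤ b ∧ (p = (a, b) ∨ p = (b, a)) := by
        rcases le_total p.1 p.2 with h | h
        · exact ⟨p.1, p.2, h, Or.inl rfl⟩
        · exact ⟨p.2, p.1, h, Or.inr rfl⟩
      have hSab : ¬ InS (a, b) := by
        intro h
        rcases hpe with rfl | rfl
        · exact hS h
        · exact hS (InS_swap h)
      obtain ⟨q, hm, hq⟩ := exists_move_to_S p a b hab hpe hSab
      have hqP : PPos q := (ih q (by have := fMove_lt hm; omega)).mpr hq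
      rw [PPos] at hP
      exact hP q hm hqP
    · intro hS
      rw [PPos]
      intro q hm hqP
      have hq : InS q := (ih q (by have := fMove_lt hm; omega)).mp hqP
      exact no_move_in_S hS hm hq

theorem stmt9 (p : ℕ × ℕ) :
    PPos p ↔ p ∈ {p : ℕ × ℕ | p = (0, 0) ∨ ∃ n : ℕ, p = (fl n + 1, fl2 n + 1) ∨ p = (fl2 n + 1, fl n + 1)} := by
  exact ppos_iff_inS p
end

section
/- The sets {(0,0)} ∪ {(⌊φn⌋+1, ⌊φ²n⌋+1) : n ≥ 0} and {(0,1)} ∪ {(⌊φn⌋+2, ⌊φ²n⌋+2) : n ≥ 0} are disjoint subsets of ℕ × ℕ, where φ = (1+√5)/2. -/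
theorem stmt13 :
    {p : ℕ × ℕ | p = (0, 0) ∨ ∃ n : ℕ, p = (fl n + 1, fl2 n + 1) ∨ p = (fl2 n + 1, fl n + 1)} ∩
    {p : ℕ × ℕ | p = (0, 1) ∨ p = (1, 0) ∨ ∃ n : ℕ, p = (fl n + 2, fl2 n + 2) ∨ p = (fl2 n + 2, fl n + 2)} = ∅ := by
  rw [Set.eq_empty_iff_forall_notMem]
  rintro ⟨x, y⟩ ⟨h1, h2⟩
  simp only [Set.mem_setOf_eq, Prod.mk.injEq] at h1 h2
  rcases h1 with ⟨hx, hy⟩ | ⟨n, ⟨hx, hy⟩ | ⟨hx, hy⟩⟩ <;>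
    rcases h2 with ⟨hx2, hy2⟩ | ⟨hx2, hy2⟩ | ⟨m, ⟨hx2, hy2⟩ | ⟨hx2, hy2⟩⟩ <;>
    subst hx <;> subst hy <;>
    (try omega) <;>
    · have hn := fl2_eq n
      have hm := fl2_eq m
      have hnm : n = m := by omega
      subst hnm
      omega
end

section
/- In F-Wythoff, for every nonnegative integer a and every nonnegative integer g, there exists a unique nonnegative integer b such that the Sprague-Grundy value of position (a,b) equals g. -/
lemma fMove_swap_iff {a b : ℕ} {q : ℕ × ℕ} : FMove (a, b) q ↔ FMove (b, a) q := by
  constructor <;>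
  · rintro ⟨a', b', x, y, h1, h2, h3, h4, h5⟩
    refine ⟨a', b', x, y, h1, h2, ?_, h4, h5⟩
    rcases h3 with h | h <;> rw [Prod.mk.injEq] at h <;>
      simp [Prod.mk.injEq] <;> omega

lemma grundy_symm (a b : ℕ) : grundy (a, b) = grundy (b, a) := by
  rw [grundy, grundy]
  congr 1
  ext g
  simp only [Set.mem_setOf_eq]
  constructor <;> intro h q hm
  · exact h q (fMove_swap_iff.mpr hm)
  · exact h q (fMove_swap_iff.mp hm)

lemma followers_finite (p : ℕ × ℕ) :
    {g : ℕ | ∃ q, FMove p q ∧ grundy q = g}.Finite := by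
  have h1 : {q : ℕ × ℕ | FMove p q}.Finite := by
    apply Set.Finite.subset ((Set.finite_Iio (p.1 + p.2)).prod (Set.finite_Iio (p.1 + p.2)))
    intro q hq
    have := fMove_lt hq
    constructor <;> simp only [Set.mem_Iio] <;> omega
  apply (h1.image grundy).subset
  rintro g ⟨q, hq, rfl⟩
  exact ⟨q, hq, rfl⟩

lemma grundy_mem (p : ℕ × ℕ) :
    grundy p ∈ {g : ℕ | ∀ q, FMove p q → grundy q ≠ g} := by
  have hne : {g : ℕ | ∀ q, FMove p q → grundy q ≠ g}.Nonempty := by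
    obtain ⟨g, hg⟩ := (followers_finite p).infinite_compl.nonempty
    exact ⟨g, fun q hq he => hg ⟨q, hq, he⟩⟩
  rw [grundy]
  exact Nat.sInf_mem hne

lemma grundy_ne {p q : ℕ × ℕ} (h : FMove p q) : grundy q ≠ grundy p :=
  grundy_mem p q h

lemma lt_grundy {p : ℕ × ℕ} {g : ℕ} (h : g < grundy p) :
    ∃ q, FMove p q ∧ grundy q = g := by
  by_contra hc
  push_neg at hc
  have hmem : g ∈ {g : ℕ | ∀ q, FMove p q → grundy q ≠ g} :=
    fun q hq => hc q hq
  have := Nat.sInf_le hmem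
  rw [grundy] at h
  omega

lemma fMove_col {a b b' : ℕ} (h : b' < b) : FMove (a, b) (a, b') := by
  rcases le_or_gt a b with hab | hab
  · rcases le_or_gt a b' with h1 | h1
    · exact ⟨a, b, a, b', hab, h1, Or.inl rfl, Or.inl rfl, Or.inl ⟨rfl, h⟩⟩
    · exact ⟨a, b, b', a, hab, le_of_lt h1, Or.inl rfl, Or.inr rfl,
        Or.inr (Or.inr (Or.inl ⟨h1, rfl⟩))⟩
  · exact ⟨b, a, b', a, le_of_lt hab, le_of_lt (h.trans hab), Or.inr rfl, Or.inr rfl,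
      Or.inr (Or.inl ⟨h, rfl⟩)⟩

lemma col_inj {a b b' : ℕ} (h : b ≠ b') : grundy (a, b) ≠ grundy (a, b') := by
  rcases Nat.lt_or_ge b b' with hlt | hge
  · exact grundy_ne (fMove_col hlt)
  · exact (grundy_ne (fMove_col (show b' < b by omega))).symm

lemma exists_col : ∀ a g : ℕ, ∃ b, grundy (a, b) = g := by
  intro a
  induction a using Nat.strong_induction_on with
  | _ a IH =>
    intro g
    by_contra hg
    push_neg at hg
    obtain ⟨bx, hbx⟩ : ∃ bx : ℕ → ℕ, ∀ x, x < a → grundy (x, bx x) = g :=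
      ⟨fun x => if h : x < a then Classical.choose (IH x h g) else 0,
       fun x hx => by
        simp only [dif_pos hx]
        exact Classical.choose_spec (IH x hx g)⟩
    set B : Finset ℕ :=
      ((Finset.range a).image bx) ∪ ((Finset.range a).image (fun x => bx x + (a - x))) with hB
    set M : ℕ := 3 * a + g + 1 with hM
    set T : Finset ℕ := (Finset.range M).filter (fun b => a ≤ b ∧ b ∉ B) with hT
    have hBcard : B.card ≤ 2 * a := by
      calc B.card ≤ ((Finset.range a).image bx).card +
          ((Finset.range a).image (fun x => bx x + (a - x))).card := Finset.card_union_le _ _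
        _ ≤ a + a := by
            gcongr <;> exact (Finset.card_image_le).trans (by simp)
        _ = 2 * a := by ring
    have hTcard : g + 1 ≤ T.card := by
      have hsplit := Finset.card_filter_add_card_filter_not
        (s := Finset.range M) (p := fun b => a ≤ b ∧ b ∉ B)
      rw [← hT] at hsplit
      have hsub : (Finset.range M).filter (fun b => ¬(a ≤ b ∧ b ∉ B)) ⊆ Finset.range a ∪ B := by
        intro b hb
        simp only [Finset.mem_filter, Finset.mem_range, not_and, not_not] at hb
        simp only [Finset.mem_union, Finset.mem_range]
        rcases Nat.lt_or_ge b a with h | h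
        · exact Or.inl h
        · exact Or.inr (hb.2 h)
      have h1 : ((Finset.range M).filter (fun b => ¬(a ≤ b ∧ b ∉ B))).card ≤ a + 2 * a := by
        calc _ ≤ (Finset.range a ∪ B).card := Finset.card_le_card hsub
          _ ≤ (Finset.range a).card + B.card := Finset.card_union_le _ _
          _ ≤ a + 2 * a := by simp; omega
      have h2 : (Finset.range M).card = M := Finset.card_range M
      omega
    have hbig : ∃ b ∈ T, g < grundy (a, b) := by
      by_contra h
      push_neg at h
      have hinj : Set.InjOn (fun b => grundy (a, b)) T := by
        intro b1 _ b2 _ he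
        by_contra hne
        exact col_inj hne he
      have hmaps : ∀ b ∈ T, grundy (a, b) ∈ Finset.range g := by
        intro b hb
        have h1 := h b hb
        have h2 := hg b
        simp only [Finset.mem_range]
        omega
      have := Finset.card_le_card_of_injOn _ hmaps hinj
      simp only [Finset.card_range] at this
      omega
    obtain ⟨b, hbT, hbg⟩ := hbig
    simp only [hT, Finset.mem_filter] at hbT
    obtain ⟨_, hab, hbB⟩ := hbT
    obtain ⟨q, hmove, hgq⟩ := lt_grundy hbg
    obtain ⟨a', b', x, y, ha'b', hxy, hp, hq', hcase⟩ := hmove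
    have haa : a = a' ∧ b = b' := by
      rcases hp with h | h <;> rw [Prod.mk.injEq] at h <;> omega
    obtain ⟨h1, h2⟩ := haa
    subst h1
    subst h2
    have hxyg : grundy (x, y) = g := by
      rcases hq' with rfl | rfl
      · exact hgq
      · rw [grundy_symm]; exact hgq
    rcases hcase with ⟨rfl, hy⟩ | ⟨hx, rfl⟩ | ⟨hx, rfl⟩ | ⟨k, hk1, hk2, _, rfl, rfl⟩
    · exact hg y hxyg
    · -- q = (x, b), x < a : b = bx x ∈ B
      have heq : y = bx x := by
        by_contra hne
        exact col_inj hne (hxyg.trans (hbx x hx).symm)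
      apply hbB
      rw [hB]
      apply Finset.mem_union_left
      exact Finset.mem_image.mpr ⟨x, Finset.mem_range.mpr hx, heq.symm⟩
    · -- q = (x, a): grundy (a, x) = g, contradiction
      exact hg x (by rw [grundy_symm]; exact hxyg)
    · -- diagonal
      have hlt : a - k < a := by omega
      have heq : b - k = bx (a - k) := by
        by_contra hne
        exact col_inj hne (hxyg.trans (hbx (a - k) hlt).symm)
      apply hbB
      rw [hB]
      apply Finset.mem_union_right
      refine Finset.mem_image.mpr ⟨a - k, Finset.mem_range.mpr hlt, ?_⟩
      omega

theorem stmt16 (a g : ℕ) : ∃! b : ℕ, grundy (a, b) = g := by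
  obtain ⟨b, hb⟩ := exists_col a g
  refine ⟨b, hb, fun b' hb' => ?_⟩
  by_contra hne
  exact col_inj hne (hb'.trans hb.symm)
end
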